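/- In any Hamiltonian cycle of the graph G constructed by the reduction, for each j with d(n_j) = 3 the cycle contains a subpath of the form A_{ij}, Y_j, A_{hj}, Z_j, A_{kj} where {m_i, m_h, m_k} is the neighborhood of n_j in B (up to relabeling of i, h, k), and for each j with d(n_j) = 2 the cycle contains the subpath A_{ij}, Y_j, A_{kj} where m_i and m_k are the two neighbors of n_j. -/

import Mathlib

/-- The vertex type of the graph `G` constructed from the bipartite graph
`B = (M, N, E)` (with `E i j` meaning `m_i n_j ∈ E`): the vertices `X_i`, `Y_j`,
`Z_j` (only for `j` with `d(n_j) = 3`) and `A_{ij}` (only for edges `m_i n_j`). -/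
def Vtx (r : ℕ) (E : Fin r → Fin r → Prop) : Type :=
  {v : Fin r ⊕ Fin r ⊕ Fin r ⊕ Fin r × Fin r //
    match v with
    | Sum.inl _ => True
    | Sum.inr (Sum.inl _) => True
    | Sum.inr (Sum.inr (Sum.inl j)) => {i : Fin r | E i j}.ncard = 3
    | Sum.inr (Sum.inr (Sum.inr (i, j))) => E i j}

/-- The vertex `X_i`. -/
def Xv {r : ℕ} {E : Fin r → Fin r → Prop} (i : Fin r) : Vtx r E :=
  ⟨Sum.inl i, trivial⟩

/-- The vertex `Y_j`. -/
def Yv {r : ℕ} {E : Fin r → Fin r → Prop} (j : Fin r) : Vtx r E :=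
  ⟨Sum.inr (Sum.inl j), trivial⟩

/-- The vertex `Z_j`, present when `d(n_j) = 3`. -/
def Zv {r : ℕ} {E : Fin r → Fin r → Prop} (j : Fin r)
    (hj : {i : Fin r | E i j}.ncard = 3) : Vtx r E :=
  ⟨Sum.inr (Sum.inr (Sum.inl j)), hj⟩

/-- The vertex `A_{ij}`, present when `m_i n_j ∈ E`. -/
def Av {r : ℕ} {E : Fin r → Fin r → Prop} (i j : Fin r) (h : E i j) : Vtx r E :=
  ⟨Sum.inr (Sum.inr (Sum.inr (i, j))), h⟩

/-- Membership in the clique `K_s = {X_s} ∪ {A_{ij} : m_i n_j ∈ E, i ≤ s}`. -/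
def inK {r : ℕ} {E : Fin r → Fin r → Prop} (s : Fin r) (v : Vtx r E) : Prop :=
  match v.val with
  | Sum.inl s' => s' = s
  | Sum.inr (Sum.inr (Sum.inr (i, _))) => i ≤ s
  | _ => False

/-- Membership in the clique `K'_j = {Y_j} ∪ {A_{ij} : m_i n_j ∈ E}`. -/
def inK' {r : ℕ} {E : Fin r → Fin r → Prop} (j : Fin r) (v : Vtx r E) : Prop :=
  match v.val with
  | Sum.inr (Sum.inl j') => j' = j
  | Sum.inr (Sum.inr (Sum.inr (_, j'))) => j' = j
  | _ => False

/-- Membership in the clique `K''_j = {Z_j} ∪ {A_{ij} : m_i n_j ∈ E}`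
(a clique of `G` only when `d(n_j) = 3`). -/
def inK'' {r : ℕ} {E : Fin r → Fin r → Prop} (j : Fin r) (v : Vtx r E) : Prop :=
  match v.val with
  | Sum.inr (Sum.inr (Sum.inl j')) => j' = j
  | Sum.inr (Sum.inr (Sum.inr (_, j'))) => j' = j
  | _ => False

/-- The graph `G` of the reduction: two distinct vertices are adjacent iff they
lie in a common clique `K_s`, `K'_j`, or `K''_j` (the latter for `d(n_j) = 3`). -/
def Gr (r : ℕ) (E : Fin r → Fin r → Prop) : SimpleGraph (Vtx r E) :=
  SimpleGraph.fromRel (fun u v =>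
    (∃ s, inK s u ∧ inK s v) ∨ (∃ j, inK' j u ∧ inK' j v) ∨
      (∃ j, {i : Fin r | E i j}.ncard = 3 ∧ inK'' j u ∧ inK'' j v))

instance {r : ℕ} {E : Fin r → Fin r → Prop} : DecidableEq (Vtx r E) := by
  unfold Vtx; infer_instance

section Aux
open SimpleGraph Walk


-- Lemma A: two cycle neighbors
lemma cycle_two_nbrs {V : Type*} [DecidableEq V] {G : SimpleGraph V} {b : V} {p : G.Walk b b}
    (hp : p.IsCycle) {v : V} (hv : v ∈ p.support) :
    ∃ w₁ w₂, w₁ ≠ w₂ ∧ s(v, w₁) ∈ p.edges ∧ s(v, w₂) ∈ p.edges ∧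
      ∀ w, s(v, w) ∈ p.edges → w = w₁ ∨ w = w₂ := by
  have hq : (p.rotate v hv).IsCycle := hp.rotate hv
  have hmem : ∀ e, e ∈ (p.rotate v hv).edges ↔ e ∈ p.edges :=
    fun e => (p.rotate_edges v hv).mem_iff
  set q := p.rotate v hv with hqdef
  clear_value q
  clear hqdef hp hv
  have hnil : ¬ q.Nil := hq.not_nil
  rw [not_nil_iff] at hnil
  obtain ⟨x, hadj, q', rfl⟩ := hnil
  rw [cons_isCycle_iff] at hq
  obtain ⟨hq'path, hxnot⟩ := hq
  have hvx : v ≠ x := hadj.ne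
  -- decompose q'.reverse
  obtain ⟨y, hady, q'', hrev⟩ := exists_eq_cons_of_ne hvx q'.reverse
  have hyedge : s(v, y) ∈ q'.edges := by
    have : s(v, y) ∈ q'.reverse.edges := by rw [hrev]; simp
    simpa using this
  have hyx : y ≠ x := by
    rintro rfl
    exact hxnot hyedge
  have hvnot : v ∉ q''.support := by
    have : q'.reverse.IsPath := hq'path.reverse
    rw [hrev, cons_isPath_iff] at this
    exact this.2
  refine ⟨x, y, hyx.symm, by rw [← hmem]; simp, by rw [← hmem]; simp [hyedge], fun w hw => ?_⟩
  rw [← hmem, edges_cons, List.mem_cons] at hw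
  rcases hw with hw | hw
  · left; exact Sym2.congr_right.mp hw
  · right
    have : s(v, w) ∈ q'.reverse.edges := by simpa using hw
    rw [hrev, edges_cons, List.mem_cons] at this
    rcases this with h1 | h1
    · exact Sym2.congr_right.mp h1
    · exact absurd (q''.fst_mem_support_of_mem_edges h1) hvnot

lemma walk_closure {V : Type*} {G : SimpleGraph V} (P : V → Prop) (L : List (Sym2 V))
    (hP : ∀ a w, P a → s(a, w) ∈ L → P w) :
    ∀ {u v : V} (w : G.Walk u v), (∀ e ∈ w.edges, e ∈ L) → P u → ∀ z ∈ w.support, P z := by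
  intro u v w
  induction w with
  | nil => intro _ hu z hz; simp at hz; subst hz; exact hu
  | @cons a c d h q ih =>
    intro hsub hu z hz
    rw [support_cons, List.mem_cons] at hz
    rcases hz with rfl | hz
    · exact hu
    · have hc : P c := hP a c hu (hsub _ (by simp))
      exact ih (fun e he => hsub e (by simp [he])) hc z hz

lemma mem_rotate_support {V : Type*} [DecidableEq V] {G : SimpleGraph V} {b : V}
    (p : G.Walk b b) (hnil : ¬ p.Nil) {v : V} (hv : v ∈ p.support) {z : V}
    (hz : z ∈ p.support) : z ∈ (p.rotate v hv).support := by
  have hb : b ∈ p.support.tail := by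
    rw [← support_tail_of_not_nil p hnil]; exact end_mem_support _
  have hzt : z ∈ p.support.tail := by
    rcases List.mem_cons.mp (by rwa [support_eq_cons p] at hz) with rfl | h
    · exact hb
    · exact h
  have : z ∈ (p.rotate v hv).support.tail := (support_rotate p v hv).mem_iff.mpr hzt
  exact List.mem_of_mem_tail this

end Aux


lemma adj_Yv {r : ℕ} {E : Fin r → Fin r → Prop} {j : Fin r} {v : Vtx r E}
    (h : (Gr r E).Adj (Yv j) v) : ∃ i, ∃ hi : E i j, v = Av i j hi := by
  rw [Gr, SimpleGraph.fromRel_adj] at h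
  obtain ⟨hne, hrel⟩ := h
  obtain ⟨val, hval⟩ := v
  have hrel' : ∃ j', inK' j' (Yv j : Vtx r E) ∧ inK' j' (⟨val, hval⟩ : Vtx r E) := by
    rcases hrel with ⟨⟨s, hs, _⟩|h'|⟨j', _, hs, _⟩⟩|⟨⟨s, _, hs⟩|⟨j', h2, h1⟩|⟨j', _, _, hs⟩⟩
    · exact absurd hs (by simp [inK, Yv])
    · exact h'
    · exact absurd hs (by simp [inK'', Yv])
    · exact absurd hs (by simp [inK, Yv])
    · exact ⟨j', h1, h2⟩
    · exact absurd hs (by simp [inK'', Yv])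
  obtain ⟨j', h1, h2⟩ := hrel'
  have hj : j = j' := h1
  subst hj
  rcases val with i | j'' | j'' | ⟨i, j''⟩
  · exact h2.elim
  · have hj'' : j'' = j := h2
    subst hj''
    exact absurd (Subtype.ext rfl) hne
  · exact h2.elim
  · have hj'' : j'' = j := h2
    subst hj''
    exact ⟨i, hval, rfl⟩

lemma adj_Zv {r : ℕ} {E : Fin r → Fin r → Prop} {j : Fin r}
    (hj : {i : Fin r | E i j}.ncard = 3) {v : Vtx r E}
    (h : (Gr r E).Adj (Zv j hj) v) : ∃ i, ∃ hi : E i j, v = Av i j hi := by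
  rw [Gr, SimpleGraph.fromRel_adj] at h
  obtain ⟨hne, hrel⟩ := h
  obtain ⟨val, hval⟩ := v
  have hrel' : ∃ j', inK'' j' (Zv j hj : Vtx r E) ∧ inK'' j' (⟨val, hval⟩ : Vtx r E) := by
    rcases hrel with ⟨⟨s, hs, _⟩|⟨j', hs, _⟩|⟨j', _, h1, h2⟩⟩|⟨⟨s, _, hs⟩|⟨j', _, hs⟩|⟨j', _, h2, h1⟩⟩
    · exact absurd hs (by simp [inK, Zv])
    · exact absurd hs (by simp [inK', Zv])
    · exact ⟨j', h1, h2⟩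
    · exact absurd hs (by simp [inK, Zv])
    · exact absurd hs (by simp [inK', Zv])
    · exact ⟨j', h1, h2⟩
  obtain ⟨j', h1, h2⟩ := hrel'
  have hjj : j = j' := h1
  subst hjj
  rcases val with i | j'' | j'' | ⟨i, j''⟩
  · exact h2.elim
  · exact h2.elim
  · have hj'' : j'' = j := h2
    subst hj''
    exact absurd (Subtype.ext rfl) hne
  · have hj'' : j'' = j := h2
    subst hj''
    exact ⟨i, hval, rfl⟩

lemma uniq_pair {α : Type*} {Q : α → Prop} {w₁ w₂ u v : α}
    (huniq : ∀ w, Q w → w = w₁ ∨ w = w₂) (hu : Q u) (hv : Q v) (huv : u ≠ v) :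
    ∀ w, Q w → w = u ∨ w = v := by
  intro w hw
  rcases huniq u hu with rfl | rfl <;> rcases huniq v hv with rfl | rfl <;>
    rcases huniq w hw with rfl | rfl <;> tauto

lemma AvYv_ne {r : ℕ} {E : Fin r → Fin r → Prop} {i j j' : Fin r} (hi : E i j) :
    (Av i j hi : Vtx r E) ≠ Yv j' := by
  intro hc
  simpa [Av, Yv] using congrArg Subtype.val hc

lemma Av_inj {r : ℕ} {E : Fin r → Fin r → Prop} {i i' j : Fin r} {hi : E i j} {hi' : E i' j}
    (h : (Av i j hi : Vtx r E) = Av i' j hi') : i = i' := by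
  have := congrArg Subtype.val h
  simp [Av] at this
  exact this

open SimpleGraph Walk in
lemma key3 {r : ℕ} (hr : 2 ≤ r) {E : Fin r → Fin r → Prop}
    {b : Vtx r E} {p : (Gr r E).Walk b b} (hp : p.IsHamiltonianCycle)
    {j i h k : Fin r} (hi : E i j) (hh : E h j) (hk : E k j)
    (hj : {i : Fin r | E i j}.ncard = 3) (hih : i ≠ h) (hhk : h ≠ k)
    (hYi : s(Yv j, Av i j hi) ∈ p.edges) (hYh : s(Yv j, Av h j hh) ∈ p.edges)
    (hZh : s(Zv j hj, Av h j hh) ∈ p.edges) (hZk : s(Zv j hj, Av k j hk) ∈ p.edges)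
    (uniqY : ∀ w, s(Yv j, w) ∈ p.edges → w = Av i j hi ∨ w = Av h j hh)
    (uniqZ : ∀ w, s(Zv j hj, w) ∈ p.edges → w = Av h j hh ∨ w = Av k j hk) :
    ∃ (i' h' k' : Fin r) (hi' : E i' j) (hh' : E h' j) (hk' : E k' j),
      i' ≠ h' ∧ h' ≠ k' ∧ i' ≠ k' ∧ ({i', h', k'} : Set (Fin r)) = {i'' : Fin r | E i'' j} ∧
      s(Av i' j hi', Yv j) ∈ p.edges ∧ s(Yv j, Av h' j hh') ∈ p.edges ∧
      s(Av h' j hh', Zv j hj) ∈ p.edges ∧ s(Zv j hj, Av k' j hk') ∈ p.edges := by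
  classical
  have hYZ : (Yv j : Vtx r E) ≠ Zv j hj := by
    intro hc; simpa [Yv, Zv] using congrArg Subtype.val hc
  have hik : i ≠ k := by
    rintro rfl
    -- degenerate 4-cycle; derive contradiction via vertex X_0
    have hAk : (Av i j hk : Vtx r E) = Av i j hi := Subtype.ext rfl
    rw [hAk] at hZk uniqZ
    -- uniqueness of neighbors of Av i and Av h
    obtain ⟨u₁, u₂, hu12, he1, he2, uAi⟩ :=
      cycle_two_nbrs hp.isCycle (hp.mem_support (Av i j hi))
    have uniqAi := uniq_pair uAi (Sym2.eq_swap ▸ hYi) (Sym2.eq_swap ▸ hZk) hYZ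
    obtain ⟨v₁, v₂, hv12, hf1, hf2, uAh⟩ :=
      cycle_two_nbrs hp.isCycle (hp.mem_support (Av h j hh))
    have uniqAh := uniq_pair uAh (Sym2.eq_swap ▸ hYh) (Sym2.eq_swap ▸ hZh) hYZ
    set P : Vtx r E → Prop :=
      fun v => v = Yv j ∨ v = Zv j hj ∨ v = Av i j hi ∨ v = Av h j hh with hP
    have hclosed : ∀ a w, P a → s(a, w) ∈ p.edges → P w := by
      rintro a w (rfl | rfl | rfl | rfl) hw
      · rcases uniqY w hw with rfl | rfl <;> simp [hP]
      · rcases uniqZ w hw with rfl | rfl <;> simp [hP]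
      · rcases uniqAi w hw with rfl | rfl <;> simp [hP]
      · rcases uniqAh w hw with rfl | rfl <;> simp [hP]
    have hnil : ¬ p.Nil := hp.isCycle.not_nil
    have hYsup : (Yv j : Vtx r E) ∈ p.support := hp.mem_support _
    have hall := walk_closure P p.edges hclosed (p.rotate _ hYsup)
      (fun e he => (p.rotate_edges _ hYsup).mem_iff.mp he) (Or.inl rfl)
    have hX : (Xv ⟨0, by omega⟩ : Vtx r E) ∈ (p.rotate _ hYsup).support :=
      mem_rotate_support p hnil hYsup (hp.mem_support _)
    have := hall _ hX
    rcases this with hc | hc | hc | hc <;> simpa [Xv, Yv, Zv, Av] using congrArg Subtype.val hc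
  refine ⟨i, h, k, hi, hh, hk, hih, hhk, hik, ?_, Sym2.eq_swap ▸ hYi, hYh,
    Sym2.eq_swap ▸ hZh, hZk⟩
  apply Set.eq_of_subset_of_ncard_le
  · rintro x (rfl | rfl | rfl) <;> assumption
  · rw [hj]
    exact (Set.ncard_eq_three.mpr ⟨i, h, k, hih, hik, hhk, rfl⟩).ge
  · exact Set.toFinite _

/-- In any Hamiltonian cycle of the graph `G` of the reduction: for each `j` with
`d(n_j) = 3` the cycle contains a subpath `A_{ij}, Y_j, A_{hj}, Z_j, A_{kj}` where
`{m_i, m_h, m_k}` is the neighborhood of `n_j` in `B`, and for each `j` with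
`d(n_j) = 2` the cycle contains the subpath `A_{ij}, Y_j, A_{kj}` where `m_i, m_k`
are the two neighbors of `n_j`. -/
theorem stmt_12 (r : ℕ) (hr : 2 ≤ r) (E : Fin r → Fin r → Prop)
    (hdeg : ∀ j : Fin r, {i : Fin r | E i j}.ncard = 2 ∨ {i : Fin r | E i j}.ncard = 3)
    {b : Vtx r E} (p : (Gr r E).Walk b b) (hp : p.IsHamiltonianCycle) :
    (∀ (j : Fin r) (hj : {i : Fin r | E i j}.ncard = 3),
      ∃ (i h k : Fin r) (hi : E i j) (hh : E h j) (hk : E k j),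
        i ≠ h ∧ h ≠ k ∧ i ≠ k ∧ ({i, h, k} : Set (Fin r)) = {i' : Fin r | E i' j} ∧
        s(Av i j hi, Yv j) ∈ p.edges ∧ s(Yv j, Av h j hh) ∈ p.edges ∧
        s(Av h j hh, Zv j hj) ∈ p.edges ∧ s(Zv j hj, Av k j hk) ∈ p.edges) ∧
    (∀ j : Fin r, {i : Fin r | E i j}.ncard = 2 →
      ∃ (i k : Fin r) (hi : E i j) (hk : E k j),
        i ≠ k ∧ ({i, k} : Set (Fin r)) = {i' : Fin r | E i' j} ∧
        s(Av i j hi, Yv j) ∈ p.edges ∧ s(Yv j, Av k j hk) ∈ p.edges) := by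
  constructor
  · intro j hj
    obtain ⟨w₁, w₂, hw12, he1, he2, uniqY0⟩ :=
      cycle_two_nbrs hp.isCycle (hp.mem_support (Yv j))
    obtain ⟨a, ha, rfl⟩ := adj_Yv (p.adj_of_mem_edges he1)
    obtain ⟨c, hc, rfl⟩ := adj_Yv (p.adj_of_mem_edges he2)
    have hac : a ≠ c := fun hcon => hw12 (by subst hcon; exact Subtype.ext rfl)
    obtain ⟨v₁, v₂, hv12, zf1, zf2, uniqZ0⟩ :=
      cycle_two_nbrs hp.isCycle (hp.mem_support (Zv j hj))
    obtain ⟨e, he, rfl⟩ := adj_Zv hj (p.adj_of_mem_edges zf1)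
    obtain ⟨f, hf, rfl⟩ := adj_Zv hj (p.adj_of_mem_edges zf2)
    have hef : e ≠ f := fun hcon => hv12 (by subst hcon; exact Subtype.ext rfl)
    have hshared : a = e ∨ a = f ∨ c = e ∨ c = f := by
      by_contra hcon
      push_neg at hcon
      obtain ⟨x, y, z, hxy, hxz, hyz, hS⟩ := Set.ncard_eq_three.mp hj
      have ha' : a ∈ ({x, y, z} : Set (Fin r)) := hS ▸ ha
      have hc' : c ∈ ({x, y, z} : Set (Fin r)) := hS ▸ hc
      have he' : e ∈ ({x, y, z} : Set (Fin r)) := hS ▸ he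
      have hf' : f ∈ ({x, y, z} : Set (Fin r)) := hS ▸ hf
      simp only [Set.mem_insert_iff, Set.mem_singleton_iff] at ha' hc' he' hf'
      rcases ha' with rfl | rfl | rfl <;> rcases hc' with rfl | rfl | rfl <;>
        rcases he' with rfl | rfl | rfl <;> rcases hf' with rfl | rfl | rfl <;> tauto
    rcases hshared with rfl | rfl | rfl | rfl
    · exact key3 hr hp hc ha hf hj hac.symm hef he2 he1 zf1 zf2
        (fun w hw => (uniqY0 w hw).symm) uniqZ0
    · exact key3 hr hp hc ha he hj hac.symm hef.symm he2 he1 zf2 zf1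
        (fun w hw => (uniqY0 w hw).symm) (fun w hw => (uniqZ0 w hw).symm)
    · exact key3 hr hp ha hc hf hj hac hef he1 he2 zf1 zf2 uniqY0 uniqZ0
    · exact key3 hr hp ha hc he hj hac hef.symm he1 he2 zf2 zf1 uniqY0
        (fun w hw => (uniqZ0 w hw).symm)
  · intro j hj
    obtain ⟨w₁, w₂, hw12, he1, he2, uniqY0⟩ :=
      cycle_two_nbrs hp.isCycle (hp.mem_support (Yv j))
    obtain ⟨a, ha, rfl⟩ := adj_Yv (p.adj_of_mem_edges he1)
    obtain ⟨c, hc, rfl⟩ := adj_Yv (p.adj_of_mem_edges he2)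
    have hac : a ≠ c := fun hcon => hw12 (by subst hcon; exact Subtype.ext rfl)
    refine ⟨a, c, ha, hc, hac, ?_, Sym2.eq_swap ▸ he1, he2⟩
    apply Set.eq_of_subset_of_ncard_le
    · rintro x (rfl | rfl) <;> assumption
    · rw [hj]
      exact (Set.ncard_pair hac).ge
    · exact Set.toFinite _
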